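/- Let H be a B-free simplicial complex on n vertices and let v, w be vertices of H such that w is a tip of a star in the link L_v. Then d^(2)(v) ≤ n − ρ(w). If moreover every edge of H has size at most 3 and every vertex u of H satisfies d(u) > (9/8)(n−1) + 5/16, then ρ(v) ≥ d^(3)(v) − 2 > (n−1)/8 − 43/16 + ρ(w). -/

import Mathlib

open Finset

/-- `E` is the edge set of a simplicial complex: it is closed under taking subsets. -/
def IsComplex {α : Type*} [DecidableEq α] (E : Finset (Finset α)) : Prop :=
  ∀ e ∈ E, ∀ f ⊆ e, f ∈ E

/-- `H` contains a copy of `F`: an injection of the vertices mapping edges to edges. -/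
def HasCopy {α β : Type*} [DecidableEq β]
    (F : Finset (Finset α)) (H : Finset (Finset β)) : Prop :=
  ∃ f : α → β, Function.Injective f ∧ ∀ e ∈ F, e.image f ∈ H

/-- downward closure of a family of sets -/
def dClosure {α : Type*} [DecidableEq α] (S : Finset (Finset α)) : Finset (Finset α) :=
  S.biUnion Finset.powerset

/-- `ex(n,F)`: the extremal number for simplicial complexes -/
noncomputable def exSC {α : Type*} (n : ℕ) (F : Finset (Finset α)) : ℕ :=
  sSup {m | ∃ E : Finset (Finset (Fin n)), IsComplex E ∧ ¬ HasCopy F E ∧ E.card = m}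

/-- `ex^(k)(n,F)`: the extremal number for `k`-uniform hypergraphs -/
noncomputable def exUnif {α : Type*} (k n : ℕ) (F : Finset (Finset α)) : ℕ :=
  sSup {m | ∃ E : Finset (Finset (Fin n)),
    (∀ e ∈ E, e.card = k) ∧ ¬ HasCopy F E ∧ E.card = m}

/-- the complex `B`: downward closure of `{{v3,v4},{v1,v2,v3},{v1,v4,v5}}`
(vertices `v1,…,v5` are `0,…,4`) -/
def B : Finset (Finset (Fin 5)) :=
  dClosure {{2, 3}, {0, 1, 2}, {0, 3, 4}}

/-- edge set of the link `L_v` -/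
def linkEdges {V : Type*} [DecidableEq V] (E : Finset (Finset V)) (v : V) :
    Finset (Finset V) :=
  (E.filter (fun e => v ∈ e)).image (fun e => e.erase v)

/-- `d^(i)(u)`: number of `i`-edges containing `u` -/
def degI {V : Type*} [DecidableEq V] (E : Finset (Finset V)) (i : ℕ) (u : V) : ℕ :=
  (E.filter (fun e => u ∈ e ∧ e.card = i)).card

/-- `d(u)`: number of edges of size at least 2 containing `u` -/
def dDeg {V : Type*} [DecidableEq V] (E : Finset (Finset V)) (u : V) : ℕ :=
  (E.filter (fun e => u ∈ e ∧ 2 ≤ e.card)).card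

/-- `e` is an isolated 2-edge of the link of `v`: a 2-edge meeting no other 2-edge -/
def IsIsolated2Edge {V : Type*} [DecidableEq V] (E : Finset (Finset V)) (v : V)
    (e : Finset V) : Prop :=
  e ∈ linkEdges E v ∧ e.card = 2 ∧
    ∀ e' ∈ linkEdges E v, e'.card = 2 → e' ≠ e → Disjoint e' e

/-- `e^(2)(L_v)`: number of 2-edges of the link of `v` -/
def e2 {V : Type*} [DecidableEq V] (E : Finset (Finset V)) (v : V) : ℕ :=
  ((linkEdges E v).filter (fun e => e.card = 2)).card

/-- `φ(v)`: number of isolated 2-edges of the link of `v` -/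
def phi {V : Type*} [DecidableEq V] (E : Finset (Finset V)) (v : V) : ℕ :=
  ((linkEdges E v).filter (fun e => e.card = 2 ∧
    ∀ e' ∈ linkEdges E v, e'.card = 2 → e' ≠ e → Disjoint e' e)).card

/-- the parameter `ρ(v) = e^(2)(L_v) + φ(v) − 2` -/
def rho {V : Type*} [DecidableEq V] (E : Finset (Finset V)) (v : V) : ℤ :=
  (e2 E v : ℤ) + (phi E v : ℤ) - 2

/-- `w` is a tip of a star in the link `L_v` -/
def TipOfStar {V : Type*} [DecidableEq V] (E : Finset (Finset V)) (v w : V) : Prop :=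
  ∃ x y : V, w ≠ x ∧ x ≠ y ∧ y ≠ w ∧
    ({w, x} : Finset V) ∈ linkEdges E v ∧ ({x, y} : Finset V) ∈ linkEdges E v

lemma mem_linkEdges_iff {V : Type*} [DecidableEq V] (E : Finset (Finset V)) (v : V)
    (g : Finset V) : g ∈ linkEdges E v ↔ v ∉ g ∧ insert v g ∈ E := by
  constructor
  · rintro hg
    simp only [linkEdges, mem_image, mem_filter] at hg
    obtain ⟨e, ⟨he, hve⟩, rfl⟩ := hg
    exact ⟨notMem_erase _ _, by rwa [insert_erase hve]⟩
  · rintro ⟨hv, hE⟩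
    simp only [linkEdges, mem_image, mem_filter]
    exact ⟨insert v g, ⟨hE, mem_insert_self _ _⟩, erase_insert hv⟩

lemma noB {V : Type*} [DecidableEq V] {E : Finset (Finset V)}
    (hcplx : IsComplex E) (hfree : ¬ HasCopy B E)
    (a₁ a₂ a₃ a₄ a₅ : V)
    (h12 : a₁ ≠ a₂) (h13 : a₁ ≠ a₃) (h14 : a₁ ≠ a₄) (h15 : a₁ ≠ a₅)
    (h23 : a₂ ≠ a₃) (h24 : a₂ ≠ a₄) (h25 : a₂ ≠ a₅)
    (h34 : a₃ ≠ a₄) (h35 : a₃ ≠ a₅) (h45 : a₄ ≠ a₅)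
    (hT1 : ({a₁, a₂, a₃} : Finset V) ∈ E) (hT2 : ({a₁, a₄, a₅} : Finset V) ∈ E)
    (hP : ({a₃, a₄} : Finset V) ∈ E) : False := by
  apply hfree
  refine ⟨![a₁, a₂, a₃, a₄, a₅], ?_, ?_⟩
  · intro i j hij
    fin_cases i <;> fin_cases j <;> simp_all
  · intro e he
    simp only [B, dClosure, mem_biUnion, mem_insert, mem_singleton, mem_powerset] at he
    obtain ⟨s, hs, hes⟩ := he
    have himg : s.image ![a₁, a₂, a₃, a₄, a₅] ∈ E := by
      rcases hs with rfl | rfl | rfl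
      · have : ({2, 3} : Finset (Fin 5)).image ![a₁, a₂, a₃, a₄, a₅] = {a₃, a₄} := by
          simp [Finset.image_insert]
        rwa [this]
      · have : ({0, 1, 2} : Finset (Fin 5)).image ![a₁, a₂, a₃, a₄, a₅] = {a₁, a₂, a₃} := by
          simp [Finset.image_insert]
        rwa [this]
      · have : ({0, 3, 4} : Finset (Fin 5)).image ![a₁, a₂, a₃, a₄, a₅] = {a₁, a₄, a₅} := by
          simp [Finset.image_insert]
        rwa [this]
    exact hcplx _ himg _ (Finset.image_subset_image hes)

lemma graph_lemma {α : Type*} [LinearOrder α] [DecidableEq α] [Nonempty α] (G : Finset (Finset α))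
    (hG2 : ∀ g ∈ G, g.card = 2)
    (hstar : ∀ g1 ∈ G, ∀ g2 ∈ G, Disjoint g1 g2 →
      ∀ b ∈ g1, ∀ c ∈ g2, ({b, c} : Finset α) ∉ G) :
    G.card + (G.filter (fun g => ∀ g' ∈ G, g' ≠ g → Disjoint g' g)).card
      ≤ (G.biUnion id).card := by
  classical
  set deg : α → ℕ := fun u => (G.filter (fun g => u ∈ g)).card with hdeg
  set Iso := G.filter (fun g => ∀ g' ∈ G, g' ≠ g → Disjoint g' g) with hIsoDef
  set G' := G \ Iso with hG'Def
  -- basic helpers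
  have hdeg1 : ∀ u : α, ∀ g ∈ G, u ∈ g → 1 ≤ deg u := by
    intro u g hg hu
    exact Finset.card_pos.2 ⟨g, mem_filter.2 ⟨hg, hu⟩⟩
  have hdeg2 : ∀ u : α, ∀ g1 ∈ G, ∀ g2 ∈ G, g1 ≠ g2 → u ∈ g1 → u ∈ g2 → 2 ≤ deg u := by
    intro u g1 hg1 g2 hg2 hne h1 h2
    exact Finset.one_lt_card.2 ⟨g1, mem_filter.2 ⟨hg1, h1⟩, g2, mem_filter.2 ⟨hg2, h2⟩, hne⟩
  have hother : ∀ e ∈ G, ∀ a ∈ e, ∃ c, c ≠ a ∧ e = {a, c} := by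
    intro e he a ha
    obtain ⟨p, q, hpq, rfl⟩ := Finset.card_eq_two.1 (hG2 e he)
    rcases mem_insert.1 ha with rfl | hq
    · exact ⟨q, hpq.symm, rfl⟩
    · rcases mem_singleton.1 hq with rfl
      exact ⟨p, hpq, Finset.pair_comm p a⟩
  -- the triangle lemma
  have htri : ∀ g ∈ G, ∀ a b : α, g = {a, b} → a ≠ b → 2 ≤ deg a → 2 ≤ deg b →
      ∃ c, c ≠ a ∧ c ≠ b ∧ ({a, c} : Finset α) ∈ G ∧ ({b, c} : Finset α) ∈ G ∧
        (∀ e ∈ G, a ∈ e → e = {a, b} ∨ e = {a, c}) ∧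
        (∀ e ∈ G, b ∈ e → e = {a, b} ∨ e = {b, c}) := by
    intro g hg a b hgab hab hda hdb
    obtain ⟨e1, he1, e2, he2, he12⟩ := Finset.one_lt_card.1 hda
    rw [mem_filter] at he1 he2
    have hex : ∃ g1 ∈ G, a ∈ g1 ∧ g1 ≠ g := by
      by_cases h : e1 = g
      · exact ⟨e2, he2.1, he2.2, by rintro rfl; exact he12 h⟩
      · exact ⟨e1, he1.1, he1.2, h⟩
    obtain ⟨g1, hg1, hag1, hg1ne⟩ := hex
    obtain ⟨c, hca, hg1eq⟩ := hother g1 hg1 a hag1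
    have hcb : c ≠ b := by
      rintro rfl
      exact hg1ne (hg1eq.trans hgab.symm)
    obtain ⟨e1', he1', e2', he2', he12'⟩ := Finset.one_lt_card.1 hdb
    rw [mem_filter] at he1' he2'
    have hex' : ∃ g2 ∈ G, b ∈ g2 ∧ g2 ≠ g := by
      by_cases h : e1' = g
      · exact ⟨e2', he2'.1, he2'.2, by rintro rfl; exact he12' h⟩
      · exact ⟨e1', he1'.1, he1'.2, h⟩
    obtain ⟨g2, hg2, hbg2, hg2ne⟩ := hex'
    obtain ⟨d, hdb', hg2eq⟩ := hother g2 hg2 b hbg2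
    have hda' : d ≠ a := by
      rintro rfl
      exact hg2ne (hg2eq.trans ((Finset.pair_comm b d).trans hgab.symm))
    have hcd : c = d := by
      by_contra hcd
      have hdisj : Disjoint g1 g2 := by
        rw [hg1eq, hg2eq, Finset.disjoint_left]
        intro x hx hx'
        simp only [mem_insert, mem_singleton] at hx hx'
        rcases hx with rfl | rfl <;> rcases hx' with h | h
        · exact hab h
        · exact hda' h.symm
        · exact hcb h
        · exact hcd h
      have := hstar g1 hg1 g2 hg2 hdisj a (by rw [hg1eq]; exact mem_insert_self _ _)
        b (by rw [hg2eq]; exact mem_insert_self _ _)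
      rw [← hgab] at this
      exact this hg
    subst hcd
    have hacG : ({a, c} : Finset α) ∈ G := by rwa [← hg1eq]
    have hbcG : ({b, c} : Finset α) ∈ G := by rwa [← hg2eq]
    refine ⟨c, hca, hcb, hacG, hbcG, ?_, ?_⟩
    · intro e he hae
      obtain ⟨e', he'a, rfl⟩ := hother e he a hae
      by_cases h1 : e' = b
      · left; rw [h1]
      by_cases h2 : e' = c
      · right; rw [h2]
      exfalso
      have hdisj : Disjoint ({a, e'} : Finset α) ({b, c} : Finset α) := by
        rw [Finset.disjoint_left]
        intro x hx hx'
        simp only [mem_insert, mem_singleton] at hx hx'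
        rcases hx with rfl | rfl <;> rcases hx' with h | h
        · exact hab h
        · exact hca h.symm
        · exact h1 h
        · exact h2 h
      have := hstar _ he _ hbcG hdisj a (mem_insert_self _ _) b (mem_insert_self _ _)
      rw [← hgab] at this
      exact this hg
    · intro e he hbe
      obtain ⟨e', he'b, rfl⟩ := hother e he b hbe
      by_cases h1 : e' = a
      · left; rw [h1, Finset.pair_comm]
      by_cases h2 : e' = c
      · right; rw [h2]
      exfalso
      have hdisj : Disjoint ({b, e'} : Finset α) ({a, c} : Finset α) := by
        rw [Finset.disjoint_left]
        intro x hx hx'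
        simp only [mem_insert, mem_singleton] at hx hx'
        rcases hx with rfl | rfl <;> rcases hx' with h | h
        · exact hab h.symm
        · exact hcb h.symm
        · exact h1 h
        · exact h2 h
      have := hstar _ he _ hacG hdisj b (mem_insert_self _ _) a (mem_insert_self _ _)
      rw [Finset.pair_comm, ← hgab] at this
      exact this hg

  -- the selector function
  set ψ : Finset α → α := fun g =>
    if h : g.Nonempty then
      if deg (g.min' h) = 1 then g.min' h
      else if deg (g.max' h) = 1 then g.max' h
      else if h3 : ∃ z, z ∉ g ∧ ({g.min' h, z} : Finset α) ∈ G ∧ ({g.max' h, z} : Finset α) ∈ G then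
        if g.min' h < h3.choose ∧ h3.choose < g.max' h then g.max' h else g.min' h
      else g.min' h
    else Classical.arbitrary α with hψdef
  have hψmem : ∀ (g : Finset α) (h : g.Nonempty), ψ g ∈ g := by
    intro g h
    simp only [hψdef, dif_pos h]
    split_ifs <;> first | exact g.min'_mem h | exact g.max'_mem h
  have hspec : ∀ g ∈ G', deg (ψ g) = 1 ∨
      ∃ c, c ∉ g ∧ 2 ≤ deg (ψ g) ∧
        (∀ e ∈ G, ψ g ∈ e → e = g ∨ e = ({ψ g, c} : Finset α)) ∧
        (∀ s ∈ g, s ≠ ψ g →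
          ((ψ g < s → ¬ (ψ g < c ∧ c < s)) ∧ (s < ψ g → (s < c ∧ c < ψ g)))) := by
    intro g hg
    have hgG : g ∈ G := (mem_sdiff.1 hg).1
    have hcard : g.card = 2 := hG2 g hgG
    have hne : g.Nonempty := Finset.card_pos.1 (by omega)
    have hab : g.min' hne < g.max' hne := Finset.min'_lt_max'_of_card g (by omega)
    have ha : g.min' hne ∈ g := g.min'_mem hne
    have hb : g.max' hne ∈ g := g.max'_mem hne
    have hgab : g = {g.min' hne, g.max' hne} := by
      refine (Finset.eq_of_subset_of_card_le ?_ ?_).symm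
      · exact insert_subset ha (singleton_subset_iff.2 hb)
      · rw [hcard, Finset.card_insert_of_notMem (by simp [hab.ne]), Finset.card_singleton]
    simp only [hψdef]
    rw [dif_pos hne]
    by_cases hda : deg (g.min' hne) = 1
    · rw [if_pos hda]; left; exact hda
    rw [if_neg hda]
    by_cases hdb : deg (g.max' hne) = 1
    · rw [if_pos hdb]; left; exact hdb
    rw [if_neg hdb]
    have hda2 : 2 ≤ deg (g.min' hne) := by
      have := hdeg1 _ g hgG ha; omega
    have hdb2 : 2 ≤ deg (g.max' hne) := by
      have := hdeg1 _ g hgG hb; omega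
    obtain ⟨c, hca, hcb, hacG, hbcG, hchara, hcharb⟩ :=
      htri g hgG (g.min' hne) (g.max' hne) hgab hab.ne hda2 hdb2
    have hcg : c ∉ g := by
      rw [hgab]; simp [hca, hcb]
    have h3ex : ∃ z, z ∉ g ∧ ({g.min' hne, z} : Finset α) ∈ G ∧
        ({g.max' hne, z} : Finset α) ∈ G := ⟨c, hcg, hacG, hbcG⟩
    rw [dif_pos h3ex]
    have hzc : h3ex.choose = c := by
      obtain ⟨hz1, hz2, hz3⟩ := h3ex.choose_spec
      rcases hchara _ hz2 (mem_insert_self _ _) with h | h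
      · exfalso; apply hz1
        have : h3ex.choose ∈ ({g.min' hne, h3ex.choose} : Finset α) := by simp
        rw [h, ← hgab] at this; exact this
      · have : h3ex.choose ∈ ({g.min' hne, c} : Finset α) := by
          rw [← h]; simp
        rcases mem_insert.1 this with h' | h'
        · exfalso; apply hz1; rw [h']; exact ha
        · exact mem_singleton.1 h'
    rw [hzc]
    right
    by_cases hbet : g.min' hne < c ∧ c < g.max' hne
    · rw [if_pos hbet]
      refine ⟨c, hcg, hdb2, ?_, ?_⟩
      · intro e he hbe
        rcases hcharb e he hbe with h | h
        · left; rw [h, ← hgab]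
        · right; exact h
      · intro s hs hsb
        have hsa : s = g.min' hne := by
          rw [hgab] at hs
          rcases mem_insert.1 hs with h | h
          · exact h
          · exact absurd (mem_singleton.1 h) hsb
        subst hsa
        constructor
        · intro h; exact absurd h (not_lt.2 hab.le)
        · intro _; exact ⟨hbet.1, hbet.2⟩
    · rw [if_neg hbet]
      refine ⟨c, hcg, hda2, ?_, ?_⟩
      · intro e he hae
        rcases hchara e he hae with h | h
        · left; rw [h, ← hgab]
        · right; exact h
      · intro s hs hsa
        have hsb : s = g.max' hne := by
          rw [hgab] at hs
          rcases mem_insert.1 hs with h | h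
          · exact absurd h hsa
          · exact mem_singleton.1 h
        subst hsb
        constructor
        · intro _
          intro hcon
          exact hbet hcon
        · intro h; exact absurd h (not_lt.2 hab.le)
  -- injectivity on G'
  have hG'sub : ∀ g ∈ G', g ∈ G := fun g hg => (mem_sdiff.1 hg).1
  have hinj : Set.InjOn ψ ↑G' := by
    intro g1 hg1' g2 hg2' heq
    simp only [Finset.mem_coe] at hg1' hg2'
    by_contra hne12
    have hg1G := hG'sub g1 hg1'
    have hg2G := hG'sub g2 hg2'
    have hne1 : g1.Nonempty := Finset.card_pos.1 (by rw [hG2 g1 hg1G]; omega)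
    have hne2 : g2.Nonempty := Finset.card_pos.1 (by rw [hG2 g2 hg2G]; omega)
    have ht1 : ψ g1 ∈ g1 := hψmem g1 hne1
    have ht2 : ψ g1 ∈ g2 := heq ▸ hψmem g2 hne2
    have hdegt : 2 ≤ deg (ψ g1) := hdeg2 _ g1 hg1G g2 hg2G hne12 ht1 ht2
    rcases hspec g1 hg1' with h1 | ⟨c1, hc1g, hdeg1t, hchar1, hord1⟩
    · omega
    rcases hspec g2 hg2' with h2 | ⟨c2, hc2g, hdeg2t, hchar2, hord2⟩
    · rw [← heq] at h2; omega
    rw [← heq] at hchar2 hord2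
    -- g2 = {t, c1}
    have hg2eq : g2 = ({ψ g1, c1} : Finset α) := by
      rcases hchar1 g2 hg2G ht2 with h | h
      · exact absurd h.symm hne12
      · exact h
    have hg1eq : g1 = ({ψ g1, c2} : Finset α) := by
      rcases hchar2 g1 hg1G ht1 with h | h
      · exact absurd h hne12
      · exact h
    have hc1t : c1 ≠ ψ g1 := by rintro h; rw [h] at hc1g; exact hc1g ht1
    have hc2t : c2 ≠ ψ g1 := by rintro h; rw [h] at hc2g; exact hc2g ht2
    have hc12 : c1 ≠ c2 := by
      rintro rfl
      exact hne12 (hg1eq.trans hg2eq.symm)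
    have hc2g1 : c2 ∈ g1 := by rw [hg1eq]; simp
    have hc1g2 : c1 ∈ g2 := by rw [hg2eq]; simp
    have H1 := hord1 c2 hc2g1 hc2t
    have H2 := hord2 c1 hc1g2 hc1t
    rcases lt_trichotomy (ψ g1) c2 with h2' | h2' | h2'
    · rcases lt_trichotomy (ψ g1) c1 with h1' | h1' | h1'
      · have A := H1.1 h2'
        have B := H2.1 h1'
        rcases lt_trichotomy c1 c2 with h | h | h
        · exact A ⟨h1', h⟩
        · exact hc12 h
        · exact B ⟨h2', h⟩
      · exact hc1t h1'.symm
      · have B := H2.2 h1'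
        exact absurd (h2'.trans B.2) (lt_irrefl _)
    · exact hc2t h2'.symm
    · have A := H1.2 h2'
      rcases lt_trichotomy (ψ g1) c1 with h1' | h1' | h1'
      · exact absurd (h1'.trans A.2) (lt_irrefl _)
      · exact hc1t h1'.symm
      · have B := H2.2 h1'
        exact absurd (A.1.trans B.1) (lt_irrefl _)
  -- counting
  have hcount1 : G'.card ≤ (G'.biUnion id).card := by
    apply Finset.card_le_card_of_injOn ψ _ hinj
    intro g hg
    have hne : g.Nonempty := Finset.card_pos.1 (by rw [hG2 g (hG'sub g hg)]; omega)
    exact Finset.mem_biUnion.2 ⟨g, hg, hψmem g hne⟩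
  have hIsoSub : Iso ⊆ G := Finset.filter_subset _ _
  have hIsoProp : ∀ g ∈ Iso, ∀ g' ∈ G, g' ≠ g → Disjoint g' g := by
    intro g hg
    exact (mem_filter.1 hg).2
  have hcount2 : (Iso.biUnion id).card = 2 * Iso.card := by
    have h1 : (Iso.biUnion id).card = ∑ u ∈ Iso, (id u : Finset α).card :=
      Finset.card_biUnion (fun g hg g' hg' hne => hIsoProp g' hg' g (hIsoSub hg) hne)
    have h2 : ∑ u ∈ Iso, (id u : Finset α).card = ∑ _u ∈ Iso, 2 :=
      Finset.sum_congr rfl (fun g hg => hG2 g (hIsoSub hg))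
    rw [h1, h2, Finset.sum_const, smul_eq_mul, mul_comm]
  have hdisjC : Disjoint (G'.biUnion id) (Iso.biUnion id) := by
    rw [Finset.disjoint_left]
    intro u hu hu'
    obtain ⟨g', hg', hug'⟩ := Finset.mem_biUnion.1 hu
    obtain ⟨g, hg, hug⟩ := Finset.mem_biUnion.1 hu'
    have hne : g' ≠ g := by
      rintro rfl
      exact (mem_sdiff.1 hg').2 hg
    exact Finset.disjoint_left.1 (hIsoProp g hg g' (hG'sub g' hg') hne) hug' hug
  have hunion : G'.biUnion id ∪ Iso.biUnion id = G.biUnion id := by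
    ext u
    simp only [mem_union, mem_biUnion, id]
    constructor
    · rintro (⟨g, hg, hu⟩ | ⟨g, hg, hu⟩)
      · exact ⟨g, hG'sub g hg, hu⟩
      · exact ⟨g, hIsoSub hg, hu⟩
    · rintro ⟨g, hg, hu⟩
      by_cases h : g ∈ Iso
      · exact Or.inr ⟨g, h, hu⟩
      · exact Or.inl ⟨g, mem_sdiff.2 ⟨hg, h⟩, hu⟩
  have hcards : G'.card + Iso.card = G.card := Finset.card_sdiff_add_card_eq_card hIsoSub
  have : (G.biUnion id).card = (G'.biUnion id).card + (Iso.biUnion id).card := by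
    rw [← hunion, Finset.card_union_of_disjoint hdisjC]
  omega

set_option maxHeartbeats 2000000 in
theorem statement14 (n : ℕ) (E : Finset (Finset (Fin n)))
    (hcplx : IsComplex E) (hfree : ¬ HasCopy B E)
    (v w : Fin n) (htip : TipOfStar E v w) :
    (degI E 2 v : ℤ) ≤ (n : ℤ) - rho E w ∧
    ((∀ e ∈ E, e.card ≤ 3) →
      (∀ u : Fin n, (dDeg E u : ℝ) > 9 / 8 * ((n : ℝ) - 1) + 5 / 16) →
      (degI E 3 v : ℤ) - 2 ≤ rho E v ∧
      (degI E 3 v : ℝ) - 2 > ((n : ℝ) - 1) / 8 - 43 / 16 + (rho E w : ℝ)) := by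
  classical
  have hnemp : Nonempty (Fin n) := ⟨v⟩
  obtain ⟨x, y, hwx, hxy, hyw, hl1, hl2⟩ := htip
  rw [mem_linkEdges_iff] at hl1 hl2
  obtain ⟨hv1, hvwx⟩ := hl1
  obtain ⟨hv2, hvxy⟩ := hl2
  simp only [mem_insert, mem_singleton, not_or] at hv1 hv2
  -- hv1 : v ≠ w ∧ v ≠ x ; hv2 : v ≠ x ∧ v ≠ y
  have hvw : v ≠ w := hv1.1
  have hvx : v ≠ x := hv1.2
  have hvy : v ≠ y := hv2.2
  -- hvwx : insert v {w,x} ∈ E ; hvxy : insert v {x,y} ∈ E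
  have hwxE : ({w, x} : Finset (Fin n)) ∈ E :=
    hcplx _ hvwx _ (Finset.subset_insert _ _)
  have hG2' : ∀ g ∈ (linkEdges E w).filter (fun g => g.card = 2), g.card = 2 :=
    fun g hg => (mem_filter.1 hg).2
  set G := (linkEdges E w).filter (fun g => g.card = 2) with hGdef
  have hother : ∀ g ∈ G, ∀ a ∈ g, ∃ b, b ≠ a ∧ g = {a, b} := by
    intro g hg a ha
    obtain ⟨p, q, hpq, rfl⟩ := Finset.card_eq_two.1 (hG2' g hg)
    rcases mem_insert.1 ha with rfl | hq
    · exact ⟨q, hpq.symm, rfl⟩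
    · rcases mem_singleton.1 hq with rfl
      exact ⟨p, hpq, Finset.pair_comm p a⟩
  have hGmem : ∀ g ∈ G, w ∉ g ∧ insert w g ∈ E := by
    intro g hg
    exact (mem_linkEdges_iff E w g).1 (mem_filter.1 hg).1
  have hGE : ∀ g ∈ G, g ∈ E := by
    intro g hg
    exact hcplx _ (hGmem g hg).2 _ (Finset.subset_insert _ _)
  -- the star property
  have hstar : ∀ g1 ∈ G, ∀ g2 ∈ G, Disjoint g1 g2 →
      ∀ b ∈ g1, ∀ c ∈ g2, ({b, c} : Finset (Fin n)) ∉ G := by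
    intro g1 hg1 g2 hg2 hdisj b hb c hc hbcG
    have hbcE : ({b, c} : Finset (Fin n)) ∈ E := hGE _ hbcG
    obtain ⟨b', hb'b, hg1eq⟩ := hother g1 hg1 b hb
    obtain ⟨c', hc'c, hg2eq⟩ := hother g2 hg2 c hc
    have hw1 := hGmem g1 hg1
    have hw2 := hGmem g2 hg2
    have hwb : w ≠ b := fun h => hw1.1 (h ▸ hb)
    have hwb' : w ≠ b' := fun h => hw1.1 (by rw [hg1eq, h]; simp)
    have hwc : w ≠ c := fun h => hw2.1 (h ▸ hc)
    have hwc' : w ≠ c' := fun h => hw2.1 (by rw [hg2eq, h]; simp)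
    have hb'g1 : b' ∈ g1 := by rw [hg1eq]; simp
    have hc'g2 : c' ∈ g2 := by rw [hg2eq]; simp
    have hbc : b ≠ c := fun h => Finset.disjoint_left.1 hdisj hb (h ▸ hc)
    have hbc' : b ≠ c' := fun h => Finset.disjoint_left.1 hdisj hb (h ▸ hc'g2)
    have hb'c : b' ≠ c := fun h => Finset.disjoint_left.1 hdisj hb'g1 (h ▸ hc)
    have hb'c' : b' ≠ c' := fun h => Finset.disjoint_left.1 hdisj hb'g1 (h ▸ hc'g2)
    have hT1 : ({w, b', b} : Finset (Fin n)) ∈ E := by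
      have : ({w, b', b} : Finset (Fin n)) = insert w g1 := by
        rw [hg1eq]; ext z; simp only [mem_insert, mem_singleton]; tauto
      rw [this]; exact hw1.2
    have hT2 : ({w, c, c'} : Finset (Fin n)) ∈ E := by
      have : ({w, c, c'} : Finset (Fin n)) = insert w g2 := by
        rw [hg2eq]
      rw [this]; exact hw2.2
    exact noB hcplx hfree w b' b c c' hwb' hwb hwc hwc'
      hb'b hb'c hb'c' hbc hbc' (fun h => hc'c h.symm) hT1 hT2 hbcE
  have hkey : G.card + (G.filter (fun g => ∀ g' ∈ G, g' ≠ g → Disjoint g' g)).card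
      ≤ (G.biUnion id).card := by
    have h := graph_lemma G hG2' hstar
    convert h using 4
  set Call := G.biUnion id with hCalldef
  set N := Finset.univ.filter (fun u => ({v, u} : Finset (Fin n)) ∈ E ∧ u ≠ v) with hNdef
  have he2w : e2 E w = G.card := rfl
  have hphiw : phi E w = (G.filter (fun g => ∀ g' ∈ G, g' ≠ g → Disjoint g' g)).card := by
    unfold phi
    apply congrArg Finset.card
    ext g
    simp only [mem_filter, hGdef]
    constructor
    · rintro ⟨hlink, h2, hP⟩
      exact ⟨⟨hlink, h2⟩, fun g' hg' hne => hP g' hg'.1 hg'.2 hne⟩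
    · rintro ⟨⟨hlink, h2⟩, hQ⟩
      exact ⟨hlink, h2, fun e' he' hc2 hne => hQ e' ⟨he', hc2⟩ hne⟩
  have hL2 : ∀ u ∈ Call, u ∈ N → u ∈ ({v, x, y} : Finset (Fin n)) := by
    intro u hu huN
    obtain ⟨g, hgG, hug⟩ := Finset.mem_biUnion.1 hu
    simp only [hNdef, mem_filter, Finset.mem_univ, true_and] at huN
    obtain ⟨hvuE, huv⟩ := huN
    by_contra hnot
    simp only [mem_insert, mem_singleton, not_or] at hnot
    obtain ⟨-, hux, huy⟩ := hnot
    obtain ⟨b, hbu, hgeq⟩ := hother g hgG u hug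
    have hwg := hGmem g hgG
    have hwu : w ≠ u := fun h => hwg.1 (h ▸ hug)
    have hbg : b ∈ g := by rw [hgeq]; simp
    have hwb : w ≠ b := fun h => hwg.1 (h ▸ hbg)
    have hwub : ({w, u, b} : Finset (Fin n)) ∈ E := by
      have h' : ({w, u, b} : Finset (Fin n)) = insert w g := by rw [hgeq]
      rw [h']; exact hwg.2
    have huvE : ({u, v} : Finset (Fin n)) ∈ E := by
      rw [Finset.pair_comm]; exact hvuE
    by_cases hbv : b = v
    · rw [hbv] at hwub
      have hT1 : ({v, u, w} : Finset (Fin n)) ∈ E := by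
        have h' : ({v, u, w} : Finset (Fin n)) = ({w, u, v} : Finset (Fin n)) := by ext z; simp only [mem_insert, mem_singleton]; tauto
        rw [h']; exact hwub
      exact noB hcplx hfree v u w x y (Ne.symm huv) hvw hvx hvy (Ne.symm hwu) hux huy
        hwx (Ne.symm hyw) hxy hT1 hvxy hwxE
    · by_cases hbx : b = x
      · rw [hbx] at hwub
        have hT1 : ({x, w, u} : Finset (Fin n)) ∈ E := by
          have h' : ({x, w, u} : Finset (Fin n)) = ({w, u, x} : Finset (Fin n)) := by ext z; simp only [mem_insert, mem_singleton]; tauto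
          rw [h']; exact hwub
        have hT2 : ({x, v, y} : Finset (Fin n)) ∈ E := by
          have h' : ({x, v, y} : Finset (Fin n)) = insert v ({x, y} : Finset (Fin n)) := by ext z; simp only [mem_insert, mem_singleton]; tauto
          rw [h']; exact hvxy
        exact noB hcplx hfree x w u v y (Ne.symm hwx) (Ne.symm hux) (Ne.symm hvx) hxy
          hwu (Ne.symm hvw) (Ne.symm hyw) huv huy hvy hT1 hT2 huvE
      · have hT1 : ({w, b, u} : Finset (Fin n)) ∈ E := by
          have h' : ({w, b, u} : Finset (Fin n)) = ({w, u, b} : Finset (Fin n)) := by ext z; simp only [mem_insert, mem_singleton]; tauto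
          rw [h']; exact hwub
        have hT2 : ({w, v, x} : Finset (Fin n)) ∈ E := by
          have h' : ({w, v, x} : Finset (Fin n)) = insert v ({w, x} : Finset (Fin n)) := by ext z; simp only [mem_insert, mem_singleton]; tauto
          rw [h']; exact hvwx
        exact noB hcplx hfree w b u v x hwb hwu (Ne.symm hvw) hwx hbu hbv hbx
          huv hux hvx hT1 hT2 huvE
  have hNcard : degI E 2 v = N.card := by
    unfold degI
    have himg : E.filter (fun e => v ∈ e ∧ e.card = 2) = N.image (fun u => insert v {u}) := by
      ext e
      simp only [mem_filter, mem_image, hNdef, Finset.mem_univ, true_and]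
      constructor
      · rintro ⟨he, hv', h2⟩
        obtain ⟨p, q, hpq, rfl⟩ := Finset.card_eq_two.1 h2
        rcases mem_insert.1 hv' with rfl | hq
        · exact ⟨q, ⟨he, Ne.symm hpq⟩, rfl⟩
        · rcases mem_singleton.1 hq with rfl
          exact ⟨p, ⟨by rwa [Finset.pair_comm], hpq⟩, (Finset.pair_comm v p)⟩
      · rintro ⟨u, ⟨hu, huv⟩, rfl⟩
        refine ⟨hu, mem_insert_self _ _, ?_⟩
        rw [Finset.card_insert_of_notMem (by simp [Ne.symm huv]), Finset.card_singleton]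
    rw [himg, Finset.card_image_of_injOn]
    intro u hu u' hu' h
    have hb : (insert v {u} : Finset (Fin n)) = insert v {u'} := h
    have h' : u ∈ ({v, u'} : Finset (Fin n)) := by rw [← hb]; simp
    rcases mem_insert.1 h' with h'' | h''
    · exfalso
      simp only [Finset.mem_coe, hNdef, mem_filter] at hu
      exact hu.2.2 h''
    · exact mem_singleton.1 h''
  have hsub3 : Call.card ≤ (Call \ {v, x, y}).card + 3 := by
    have h1 : Call ⊆ (Call \ {v, x, y}) ∪ {v, x, y} := by
      intro u hu
      by_cases h : u ∈ ({v, x, y} : Finset (Fin n))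
      · exact mem_union_right _ h
      · exact mem_union_left _ (mem_sdiff.2 ⟨hu, h⟩)
    have h2 : ({v, x, y} : Finset (Fin n)).card ≤ 3 := by
      apply le_trans (Finset.card_insert_le _ _)
      have h3 : ({x, y} : Finset (Fin n)).card ≤ 2 := by
        apply le_trans (Finset.card_insert_le _ _)
        simp
      omega
    calc Call.card ≤ ((Call \ {v, x, y}) ∪ {v, x, y}).card := Finset.card_le_card h1
      _ ≤ (Call \ {v, x, y}).card + ({v, x, y} : Finset (Fin n)).card :=
          Finset.card_union_le _ _
      _ ≤ (Call \ {v, x, y}).card + 3 := by omega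
  have hNv : ∀ u ∈ N, u ≠ v := by
    intro u hu
    simp only [hNdef, mem_filter] at hu
    exact hu.2.2
  have hdisjN : Disjoint (Call \ {v, x, y}) N := by
    rw [Finset.disjoint_left]
    intro u hu huN
    obtain ⟨huC, hunot⟩ := mem_sdiff.1 hu
    exact hunot (hL2 u huC huN)
  have hbound : (Call \ {v, x, y}).card + N.card ≤ n - 1 := by
    rw [← Finset.card_union_of_disjoint hdisjN]
    have hsub : (Call \ {v, x, y}) ∪ N ⊆ Finset.univ.erase v := by
      intro u hu
      rcases Finset.mem_union.1 hu with h | h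
      · refine Finset.mem_erase.2 ⟨?_, Finset.mem_univ _⟩
        intro h'; exact (Finset.mem_sdiff.1 h).2 (by rw [h']; simp)
      · exact Finset.mem_erase.2 ⟨hNv u h, Finset.mem_univ _⟩
    calc ((Call \ {v, x, y}) ∪ N).card ≤ (Finset.univ.erase v).card :=
          Finset.card_le_card hsub
      _ = n - 1 := by
          rw [Finset.card_erase_of_mem (Finset.mem_univ _)]
          simp
  have hn1 : 1 ≤ n := by
    have := v.isLt; omega
  have hmain : degI E 2 v + (e2 E w + phi E w) ≤ n + 2 := by
    rw [hNcard, he2w, hphiw]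
    omega
  have hpart1 : (degI E 2 v : ℤ) ≤ (n : ℤ) - rho E w := by
    simp only [rho]
    omega
  refine ⟨hpart1, fun hsize hdeg => ?_⟩
  have hj : degI E 3 v = e2 E v := by
    unfold degI e2
    have himg : (linkEdges E v).filter (fun g => g.card = 2)
        = (E.filter (fun e => v ∈ e ∧ e.card = 3)).image (fun e => e.erase v) := by
      ext g
      simp only [mem_filter, mem_image]
      constructor
      · rintro ⟨hg, h2⟩
        rw [mem_linkEdges_iff] at hg
        refine ⟨insert v g, ⟨hg.2, mem_insert_self _ _, ?_⟩, Finset.erase_insert hg.1⟩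
        rw [Finset.card_insert_of_notMem hg.1, h2]
      · rintro ⟨e, ⟨he, hve, h3⟩, rfl⟩
        refine ⟨(mem_linkEdges_iff E v _).2
          ⟨Finset.notMem_erase _ _, by rwa [Finset.insert_erase hve]⟩, ?_⟩
        rw [Finset.card_erase_of_mem hve, h3]
    rw [himg, Finset.card_image_of_injOn]
    · intro e he e' he' h
      simp only [Finset.mem_coe, mem_filter] at he he'
      rw [← Finset.insert_erase he.2.1, ← Finset.insert_erase he'.2.1,
        show e.erase v = e'.erase v from h]
  have hk : dDeg E v = degI E 2 v + degI E 3 v := by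
    unfold dDeg degI
    rw [← Finset.card_union_of_disjoint ?hd]
    case hd =>
      rw [Finset.disjoint_left]
      rintro e he he'
      have h1 := (mem_filter.1 he).2.2
      have h2 := (mem_filter.1 he').2.2
      omega
    congr 1
    ext e
    simp only [mem_union, mem_filter]
    constructor
    · rintro ⟨he, hv', h2⟩
      have h3 := hsize e he
      rcases (by omega : e.card = 2 ∨ e.card = 3) with h | h
      · exact Or.inl ⟨he, hv', h⟩
      · exact Or.inr ⟨he, hv', h⟩
    · rintro (⟨he, hv', h⟩ | ⟨he, hv', h⟩) <;> exact ⟨he, hv', by omega⟩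
  constructor
  · have hje := hj
    simp only [rho]
    omega
  · have hp1 : (degI E 2 v : ℝ) ≤ (n : ℝ) - ((rho E w : ℤ) : ℝ) := by
      exact_mod_cast hpart1
    have hdv := hdeg v
    have hkR : (dDeg E v : ℝ) = (degI E 2 v : ℝ) + (degI E 3 v : ℝ) := by
      rw [hk]; push_cast; ring
    linarith
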